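/- Let p ≥ 2 and H > 0. For all η ≥ 0, setting f(η) = (p-1) + ((p-1)/H)η + ((p-1)/(2pH^2))η^2 and g(η) = (1 + ((p-1)/(pH))η)^{p/(p-1)}, we have f(η) - (p-1)g(η) ≥ 0. -/

import Mathlib

lemma key_taylor_bound (q : ℝ) (hq1 : 1 < q) (hq2 : q ≤ 2) (x : ℝ) (hx : 0 ≤ x) :
    (1 + x) ^ q ≤ 1 + q * x + q * (q - 1) / 2 * x ^ 2 := by
  set F : ℝ → ℝ := fun t => 1 + q * t + q * (q - 1) / 2 * t ^ 2 - (1 + t) ^ q with hF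
  have hderiv : ∀ t : ℝ, 0 ≤ t →
      HasDerivAt F (q + q * (q - 1) * t - q * (1 + t) ^ (q - 1)) t := by
    intro t ht
    have h1t : (1 : ℝ) + t ≠ 0 := by positivity
    have hrp : HasDerivAt (fun t : ℝ => (1 + t) ^ q) (q * (1 + t) ^ (q - 1)) t := by
      have := (Real.hasDerivAt_rpow_const (x := 1 + t) (p := q) (Or.inl h1t)).comp t
        ((hasDerivAt_id t).const_add 1)
      simpa [Function.comp_def] using this
    have hpoly : HasDerivAt (fun t : ℝ => 1 + q * t + q * (q - 1) / 2 * t ^ 2)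
        (q + q * (q - 1) * t) t := by
      have h1 : HasDerivAt (fun t : ℝ => 1 + q * t) q t := by
        simpa using ((hasDerivAt_id t).const_mul q).const_add 1
      have h2 : HasDerivAt (fun t : ℝ => q * (q - 1) / 2 * t ^ 2)
          (q * (q - 1) / 2 * (2 * t)) t := by
        simpa using (hasDerivAt_pow 2 t).const_mul (q * (q - 1) / 2)
      have := h1.add h2
      exact this.congr_deriv (by ring)
    exact hpoly.sub hrp
  have hmono : MonotoneOn F (Set.Ici 0) := by
    apply monotoneOn_of_deriv_nonneg (convex_Ici 0)
    · exact fun t ht => ((hderiv t ht).continuousAt).continuousWithinAt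
    · intro t ht
      rw [interior_Ici] at ht
      exact ((hderiv t (le_of_lt ht)).differentiableAt).differentiableWithinAt
    · intro t ht
      rw [interior_Ici] at ht
      rw [(hderiv t (le_of_lt ht)).deriv]
      have hb : (1 + t) ^ (q - 1) ≤ 1 + (q - 1) * t :=
        rpow_one_add_le_one_add_mul_self (by linarith [le_of_lt (Set.mem_Ioi.mp ht)])
          (by linarith) (by linarith)
      nlinarith [le_of_lt (Set.mem_Ioi.mp ht)]
  have hF0 : F 0 = 0 := by simp [hF]
  have := hmono (Set.self_mem_Ici) (Set.mem_Ici.mpr hx) hx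
  rw [hF0] at this
  simp only [hF] at this
  linarith

theorem f_minus_g_nonneg (p H : ℝ) (hp : 2 ≤ p) (hH : 0 < H) (η : ℝ) (hη : 0 ≤ η) :
    ((p - 1) + ((p - 1) / H) * η + ((p - 1) / (2 * p * H ^ 2)) * η ^ 2) -
      (p - 1) * (1 + ((p - 1) / (p * H)) * η) ^ (p / (p - 1)) ≥ 0 := by
  have hp1 : (1:ℝ) < p := by linarith
  have hp0 : (0:ℝ) < p := by linarith
  have hpm1 : (0:ℝ) < p - 1 := by linarith
  set q : ℝ := p / (p - 1) with hq
  have hq1 : 1 < q := by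
    rw [hq, lt_div_iff₀ hpm1]; linarith
  have hq2 : q ≤ 2 := by
    rw [hq, div_le_iff₀ hpm1]; linarith
  set x : ℝ := ((p - 1) / (p * H)) * η with hx
  have hx0 : 0 ≤ x := by positivity
  have hkey := key_taylor_bound q hq1 hq2 x hx0
  have hmul : (p - 1) * (1 + x) ^ q ≤ (p - 1) * (1 + q * x + q * (q - 1) / 2 * x ^ 2) :=
    mul_le_mul_of_nonneg_left hkey (le_of_lt hpm1)
  have heq : (p - 1) * (1 + q * x + q * (q - 1) / 2 * x ^ 2) =
      ((p - 1) + ((p - 1) / H) * η + ((p - 1) / (2 * p * H ^ 2)) * η ^ 2) := by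
    rw [hq, hx]
    field_simp
    ring
  linarith [hmul, heq ▸ hmul]
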